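/- For every ξ ∈ ℝ²∖{0}, the 3×3 real symmetric matrix s(ξ) := (1/(2μ|ξ|))·(m·D(ξ) − I₃) is negative definite. (The principal symbol of the elastic single layer potential operator is negative definite, so the single layer operator is elliptic of order −1 and sign-definite.) -/

import Mathlib

/-- The block-diagonal matrix `D(ξ) = diag(Λ(ξ), 1)`, `Λ(ξ)_{ij} = ξ_i ξ_j / |ξ|²`. -/
noncomputable def dMat (ξ : Fin 2 → ℝ) : Matrix (Fin 3) (Fin 3) ℝ :=
  Matrix.of fun p q =>
    (![ξ 0, ξ 1, 0] p * ![ξ 0, ξ 1, 0] q) / (ξ 0 ^ 2 + ξ 1 ^ 2) +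
      (if p = 2 ∧ q = 2 then 1 else 0)

lemma key_ineq (m t X : ℝ) (hm : m < 1) (ht0 : 0 ≤ t) (htX : t ≤ X) (hX : 0 < X) :
    0 < X - m * t := by
  rcases le_or_gt m 0 with h | h
  · nlinarith
  · nlinarith

/-- The principal symbol `s(ξ) = (1/(2μ|ξ|))(m·D(ξ) − I₃)`, `m = (λ+μ)/(2(λ+2μ))`, of the
elastic single layer potential is negative definite for every `ξ ≠ 0`. -/
theorem single_layer_symbol_negDef
    (lam mu : ℝ) (hmu : 0 < mu) (hlam2mu : 0 < lam + 2 * mu)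
    (ξ : Fin 2 → ℝ) (hξ : ξ ≠ 0) :
    (-((1 / (2 * mu * Real.sqrt (ξ 0 ^ 2 + ξ 1 ^ 2))) •
        (((lam + mu) / (2 * (lam + 2 * mu))) • dMat ξ - 1))).PosDef := by
  have hr2 : 0 < ξ 0 ^ 2 + ξ 1 ^ 2 := by
    rcases Function.ne_iff.mp hξ with ⟨i, hi⟩
    simp only [Pi.zero_apply] at hi
    fin_cases i <;> positivity
  have hs : 0 < Real.sqrt (ξ 0 ^ 2 + ξ 1 ^ 2) := Real.sqrt_pos.mpr hr2
  have hc : 0 < 1 / (2 * mu * Real.sqrt (ξ 0 ^ 2 + ξ 1 ^ 2)) := by positivity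
  set m : ℝ := (lam + mu) / (2 * (lam + 2 * mu)) with hmdef
  have hm1 : m < 1 := by
    rw [hmdef, div_lt_one (by linarith)]
    linarith
  refine Matrix.posDef_iff_dotProduct_mulVec.mpr ⟨?_, ?_⟩
  · ext i j
    fin_cases i <;> fin_cases j <;>
      simp [dMat, Matrix.conjTranspose_apply, Matrix.smul_apply, Matrix.sub_apply,
        Matrix.one_apply, mul_comm]
  · intro x hx
    have hX : 0 < x 0 ^ 2 + x 1 ^ 2 + x 2 ^ 2 := by
      rcases Function.ne_iff.mp hx with ⟨i, hi⟩
      simp only [Pi.zero_apply] at hi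
      fin_cases i <;> positivity
    have hCS : (ξ 0 * x 0 + ξ 1 * x 1) ^ 2 ≤ (ξ 0 ^ 2 + ξ 1 ^ 2) * (x 0 ^ 2 + x 1 ^ 2) := by
      nlinarith [sq_nonneg (ξ 0 * x 1 - ξ 1 * x 0)]
    set t : ℝ := (ξ 0 * x 0 + ξ 1 * x 1) ^ 2 / (ξ 0 ^ 2 + ξ 1 ^ 2) + x 2 ^ 2 with htdef
    have ht0 : 0 ≤ t := by positivity
    have htX : t ≤ x 0 ^ 2 + x 1 ^ 2 + x 2 ^ 2 := by
      rw [htdef]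
      have h2 : (ξ 0 * x 0 + ξ 1 * x 1) ^ 2 / (ξ 0 ^ 2 + ξ 1 ^ 2) ≤ x 0 ^ 2 + x 1 ^ 2 := by
        rw [div_le_iff₀ hr2]; nlinarith
      linarith
    have hkey := key_ineq m t _ hm1 ht0 htX hX
    have hquad : dotProduct (star x) (Matrix.mulVec (-((1 / (2 * mu * Real.sqrt (ξ 0 ^ 2 + ξ 1 ^ 2))) •
        (m • dMat ξ - 1))) x) =
        (1 / (2 * mu * Real.sqrt (ξ 0 ^ 2 + ξ 1 ^ 2))) *
          ((x 0 ^ 2 + x 1 ^ 2 + x 2 ^ 2) - m * t) := by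
      simp [dMat, dotProduct, Matrix.mulVec, Fin.sum_univ_three, Matrix.neg_apply,
        Matrix.smul_apply, Matrix.sub_apply, Matrix.one_apply, htdef]
      ring
    rw [hquad]
    positivity
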